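/- arXiv:1601.01482 — 2 statements merged into one kernel-verified Lean document; each statement's English description precedes it below -/
import Mathlib

section
/- For every n ∈ ℕ, every k, h₁, …, hₙ ∈ ℒ, and every real polynomial p ∈ ℝ[x₁, …, xₙ], one has [a(k), p(a†(h₁), …, a†(hₙ))] = Σᵢ₌₁ⁿ (∂p/∂xᵢ)(a†(h₁), …, a†(hₙ))·⟨k, hᵢ⟩, where p(a†(h₁), …, a†(hₙ)) denotes the evaluation of p at the pairwise commuting elements a†(h₁), …, a†(hₙ). -/
open scoped RealInnerProductSpace

/-- Evaluation of a real multivariate polynomial at an n-tuple of (pairwise commuting)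
elements of a possibly noncommutative ℝ-algebra: monomials are evaluated as ordered
products b 0 ^ d 0 * b 1 ^ d 1 * ⋯ * b (n-1) ^ d (n-1). -/
noncomputable def mvEvalAlg {A : Type*} [Ring A] [Algebra ℝ A] {n : ℕ}
    (b : Fin n → A) (p : MvPolynomial (Fin n) ℝ) : A :=
  p.support.sum fun d =>
    algebraMap ℝ A (MvPolynomial.coeff d p) *
      ((List.finRange n).map fun i => b i ^ d i).prod

section Aux

set_option linter.unusedSectionVars false

variable {A : Type*} [Ring A] [Algebra ℝ A] {n : ℕ}

private lemma D_mul' (x u v : A) :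
    x*(u*v) - (u*v)*x = (x*u - u*x)*v + u*(x*v - v*x) := by noncomm_ring

private lemma D_pow' (x y : A) (c : ℝ) (hy : x*y - y*x = c • (1:A)) :
    ∀ p : ℕ, x * y^(p+1) - y^(p+1) * x = (((p+1:ℕ):ℝ) * c) • y ^ p := by
  intro p; induction p with
  | zero => simpa using hy
  | succ p ih =>
      have h1 : y^(p+2) = y * y^(p+1) := by rw [← pow_succ']
      rw [h1, D_mul', hy, ih, smul_mul_assoc, one_mul, mul_smul_comm, ← pow_succ', ← add_smul]
      congr 1
      push_cast; ring

private lemma prod_pow_add' (b : Fin n → A) (hb : ∀ i j, Commute (b i) (b j))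
    (d₁ d₂ : Fin n → ℕ) (L : List (Fin n)) :
    (L.map fun i => b i ^ (d₁ i + d₂ i)).prod
      = (L.map fun i => b i ^ d₁ i).prod * (L.map fun i => b i ^ d₂ i).prod := by
  induction L with
  | nil => simp
  | cons a L ih =>
      have hc : Commute (b a ^ d₂ a) ((L.map fun i => b i ^ d₁ i).prod) := by
        apply Commute.list_prod_right
        intro y hy
        simp only [List.mem_map] at hy
        obtain ⟨j, _, rfl⟩ := hy
        exact (hb a j).pow_pow _ _
      rw [List.map_cons, List.prod_cons, ih, pow_add, List.map_cons, List.prod_cons,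
        List.map_cons, List.prod_cons, mul_assoc, mul_assoc, ← mul_assoc (b a ^ d₂ a),
        hc.eq, mul_assoc]

private lemma prod_single_aux' (b : Fin n → A) (i : Fin n) (m : ℕ) (L : List (Fin n))
    (hnd : L.Nodup) (hi : i ∈ L) :
    (L.map fun j => b j ^ (Finsupp.single i m) j).prod = b i ^ m := by
  induction L with
  | nil => simp at hi
  | cons a L ih =>
      rcases List.nodup_cons.mp hnd with ⟨ha, hnd'⟩
      by_cases hai : a = i
      · subst hai
        have h1 : (L.map fun j => b j ^ (Finsupp.single a m) j).prod = 1 := by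
          apply List.prod_eq_one
          intro x hx
          simp only [List.mem_map] at hx
          obtain ⟨j, hj, rfl⟩ := hx
          have : j ≠ a := fun e => ha (e ▸ hj)
          rw [Finsupp.single_apply, if_neg (Ne.symm this), pow_zero]
        rw [List.map_cons, List.prod_cons, h1, mul_one, Finsupp.single_apply, if_pos rfl]
      · have hi' : i ∈ L := by
          rcases List.mem_cons.mp hi with h | h
          · exact absurd h.symm hai
          · exact h
        rw [List.map_cons, List.prod_cons, Finsupp.single_apply,
          if_neg (fun e => hai e.symm), pow_zero, one_mul, ih hnd' hi']

/-- Ordered product of powers given by an exponent vector. -/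
private noncomputable def Pd (b : Fin n → A) (d : Fin n →₀ ℕ) : A :=
  ((List.finRange n).map fun i => b i ^ d i).prod

private lemma Pd_add (b : Fin n → A) (hb : ∀ i j, Commute (b i) (b j)) (d₁ d₂ : Fin n →₀ ℕ) :
    Pd b (d₁ + d₂) = Pd b d₁ * Pd b d₂ := by
  unfold Pd
  have : (fun i => b i ^ (d₁ + d₂) i) = fun i => b i ^ (d₁ i + d₂ i) := by
    funext i; rw [Finsupp.add_apply]
  rw [this, prod_pow_add' b hb]

private lemma Pd_single (b : Fin n → A) (i : Fin n) (m : ℕ) :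
    Pd b (Finsupp.single i m) = b i ^ m :=
  prod_single_aux' b i m _ (List.nodup_finRange n) (List.mem_finRange i)

private lemma Pd_zero (b : Fin n → A) : Pd b 0 = 1 := by
  unfold Pd
  apply List.prod_eq_one
  intro x hx
  simp only [List.mem_map] at hx
  obtain ⟨j, _, rfl⟩ := hx
  simp

private lemma D_Pd (x : A) (b : Fin n → A) (hb : ∀ i j, Commute (b i) (b j)) (c : Fin n → ℝ)
    (hx : ∀ i, x * b i - b i * x = c i • (1:A)) (d : Fin n →₀ ℕ) :
    x * Pd b d - Pd b d * x
      = ∑ i : Fin n, ((d i : ℝ) * c i) • Pd b (d - Finsupp.single i 1) := by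
  induction d using Finsupp.induction with
  | zero => simp [Pd_zero]
  | single_add j m f hjf hm ih =>
      obtain ⟨m, rfl⟩ := Nat.exists_eq_succ_of_ne_zero hm
      have hfj : f j = 0 := Finsupp.notMem_support_iff.mp hjf
      have hsplit : Pd b (Finsupp.single j (m+1) + f) = b j ^ (m+1) * Pd b f := by
        rw [Pd_add b hb, Pd_single]
      have hDb : x * b j ^ (m+1) - b j ^ (m+1) * x = (((m+1:ℕ):ℝ) * c j) • b j ^ m :=
        D_pow' x (b j) (c j) (hx j) m
      have key_j : Finsupp.single j (m+1) + f - Finsupp.single j 1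
          = Finsupp.single j m + f := by
        ext y
        by_cases hy : y = j
        · subst hy; simp [hfj]
        · simp [Finsupp.single_apply, Ne.symm hy, hy]
      have key_ne : ∀ i : Fin n, i ≠ j →
          Finsupp.single j (m+1) + f - Finsupp.single i 1
            = Finsupp.single j (m+1) + (f - Finsupp.single i 1) := by
        intro i hij
        ext y
        by_cases hy : y = j
        · subst hy
          simp [Finsupp.single_apply, Ne.symm hij, hij]
        · by_cases hyi : y = i
          · subst hyi
            simp [Finsupp.single_apply, Ne.symm hy, hy]
          · simp [Finsupp.single_apply, Ne.symm hy, hy, Ne.symm hyi, hyi]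
      rw [hsplit, D_mul', hDb, ih, Finset.mul_sum, smul_mul_assoc]
      rw [← Finset.add_sum_erase _ _ (Finset.mem_univ j)]
      conv_rhs => rw [← Finset.add_sum_erase _ _ (Finset.mem_univ j)]
      simp only [hfj, Nat.cast_zero, zero_mul, zero_smul, mul_zero, zero_add]
      congr 1
      · rw [key_j, Pd_add b hb, Pd_single]
        congr 2
        simp [Finsupp.add_apply, Finsupp.single_apply, hfj]
      · apply Finset.sum_congr rfl
        intro i hi
        have hij : i ≠ j := (Finset.mem_erase.mp hi).1
        rw [key_ne i hij, Pd_add b hb, Pd_single, mul_smul_comm]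
        congr 2
        simp [Finsupp.add_apply, Finsupp.single_apply, Ne.symm hij]

private lemma mvEvalAlg_def (b : Fin n → A) (p : MvPolynomial (Fin n) ℝ) :
    mvEvalAlg b p = p.support.sum fun d => algebraMap ℝ A (MvPolynomial.coeff d p) * Pd b d :=
  rfl

private lemma mvEvalAlg_eq_sum_subset (b : Fin n → A) (p : MvPolynomial (Fin n) ℝ)
    (s : Finset (Fin n →₀ ℕ)) (hs : p.support ⊆ s) :
    mvEvalAlg b p = s.sum fun d => algebraMap ℝ A (MvPolynomial.coeff d p) * Pd b d := by
  rw [mvEvalAlg_def]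
  apply Finset.sum_subset hs
  intro d _ hd
  rw [MvPolynomial.notMem_support_iff.mp hd, map_zero, zero_mul]

private lemma mvEvalAlg_add (b : Fin n → A) (p q : MvPolynomial (Fin n) ℝ) :
    mvEvalAlg b (p + q) = mvEvalAlg b p + mvEvalAlg b q := by
  rw [mvEvalAlg_eq_sum_subset b (p+q) (p.support ∪ q.support)
      (MvPolynomial.support_add),
    mvEvalAlg_eq_sum_subset b p (p.support ∪ q.support) Finset.subset_union_left,
    mvEvalAlg_eq_sum_subset b q (p.support ∪ q.support) Finset.subset_union_right,
    ← Finset.sum_add_distrib]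
  apply Finset.sum_congr rfl
  intro d _
  rw [MvPolynomial.coeff_add, map_add, add_mul]

private lemma mvEvalAlg_monomial (b : Fin n → A) (d : Fin n →₀ ℕ) (c : ℝ) :
    mvEvalAlg b (MvPolynomial.monomial d c) = algebraMap ℝ A c * Pd b d := by
  by_cases hc : c = 0
  · subst hc; simp [mvEvalAlg_def, MvPolynomial.support_monomial]
  · rw [mvEvalAlg_def, MvPolynomial.support_monomial, if_neg hc, Finset.sum_singleton,
      MvPolynomial.coeff_monomial, if_pos rfl]

end Aux

/-- For every n, every k, h₁, …, hₙ ∈ ℒ and every p ∈ ℝ[x₁, …, xₙ],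
[a(k), p(a†(h₁), …, a†(hₙ))] = Σᵢ (∂p/∂xᵢ)(a†(h₁), …, a†(hₙ))·⟨k, hᵢ⟩. -/
theorem commutator_polynomial_creation
    {L : Type*} [NormedAddCommGroup L] [InnerProductSpace ℝ L]
    {A : Type*} [Ring A] [Algebra ℝ A]
    (a adag : L →ₗ[ℝ] A)
    (hcomm : ∀ k l : L, a k * a l - a l * a k = 0)
    (hcomm' : ∀ k l : L, adag k * adag l - adag l * adag k = 0)
    (hccr : ∀ k l : L, a k * adag l - adag l * a k = ⟪k, l⟫ • (1 : A))
    (n : ℕ) (k : L) (h : Fin n → L) (p : MvPolynomial (Fin n) ℝ) :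
    a k * mvEvalAlg (fun i => adag (h i)) p - mvEvalAlg (fun i => adag (h i)) p * a k
      = ∑ i : Fin n, ⟪k, h i⟫ • mvEvalAlg (fun j => adag (h j)) (MvPolynomial.pderiv i p) := by
  have hb : ∀ i j : Fin n, Commute (adag (h i)) (adag (h j)) := fun i j =>
    sub_eq_zero.mp (hcomm' (h i) (h j))
  induction p using MvPolynomial.induction_on' with
  | monomial d c =>
      rw [mvEvalAlg_monomial, ← Algebra.smul_def, mul_smul_comm, smul_mul_assoc, ← smul_sub,
        D_Pd (a k) (fun i => adag (h i)) hb (fun i => ⟪k, h i⟫)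
          (fun i => hccr k (h i)) d, Finset.smul_sum]
      apply Finset.sum_congr rfl
      intro i _
      rw [MvPolynomial.pderiv_monomial, mvEvalAlg_monomial, ← Algebra.smul_def,
        smul_smul, smul_smul]
      congr 1
      ring
  | add p q hp hq =>
      rw [mvEvalAlg_add]
      have : a k * (mvEvalAlg (fun i => adag (h i)) p + mvEvalAlg (fun i => adag (h i)) q)
          - (mvEvalAlg (fun i => adag (h i)) p + mvEvalAlg (fun i => adag (h i)) q) * a k
          = (a k * mvEvalAlg (fun i => adag (h i)) p - mvEvalAlg (fun i => adag (h i)) p * a k)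
            + (a k * mvEvalAlg (fun i => adag (h i)) q
                - mvEvalAlg (fun i => adag (h i)) q * a k) := by noncomm_ring
      rw [this, hp, hq, ← Finset.sum_add_distrib]
      apply Finset.sum_congr rfl
      intro i _
      rw [map_add, mvEvalAlg_add, smul_add]
end

section
/- Let h₁, …, hₙ ∈ ℒ be linearly independent and let p ∈ ℝ[x₁, …, xₙ]. Then p(Φ(h₁), …, Φ(hₙ)) = 0 ℙ-almost everywhere on Ω if and only if p(x₁, …, xₙ) = 0 for all (x₁, …, xₙ) ∈ ℝⁿ, i.e. p is the zero polynomial. -/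
open MeasureTheory
open scoped RealInnerProductSpace

set_option maxHeartbeats 1000000

section AuxGaussianField
open MeasureTheory Complex Real
open scoped RealInnerProductSpace NNReal ENNReal

noncomputable section
variable {n : ℕ}




lemma integrable_gauss_real {n : ℕ} {c : ℝ} (hc : 0 < c) :
    Integrable (fun x : EuclideanSpace ℝ (Fin n) => Real.exp (-c * ‖x‖^2)) volume := by
  have hb : (0:ℝ) < ((c : ℂ)).re := by simpa using hc
  have h0 := (GaussianFourier.integrable_cexp_neg_mul_sq_norm_add
    (V := EuclideanSpace ℝ (Fin n)) hb Complex.I (0 : EuclideanSpace ℝ (Fin n))).norm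
  refine h0.congr (Filter.Eventually.of_forall fun t => ?_)
  simp only [inner_zero_left, Complex.ofReal_zero, mul_zero, add_zero]
  rw [Complex.norm_exp]
  congr 1
  simp [Complex.mul_re, ← Complex.ofReal_pow]

/-- normalized gaussian density on EuclideanSpace, as an `ℝ≥0`-valued function -/
def gaussDen (n : ℕ) : EuclideanSpace ℝ (Fin n) → ℝ≥0 :=
  fun x => Real.toNNReal (((2*π) ^ ((n:ℝ)/2))⁻¹ * Real.exp (-(1/2) * ‖x‖^2))

lemma gaussDen_meas : Measurable (fun x => ((gaussDen n x : ℝ≥0∞))) := by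
  apply Measurable.coe_nnreal_ennreal
  apply Measurable.real_toNNReal
  exact ((measurable_norm.pow_const 2 |>.const_mul (-(1/2))).exp.const_mul _)

lemma gaussDen_meas' : Measurable (fun x => gaussDen n x) := by
  apply Measurable.real_toNNReal
  exact ((measurable_norm.pow_const 2 |>.const_mul (-(1/2))).exp.const_mul _)

lemma gaussDen_pos (x : EuclideanSpace ℝ (Fin n)) : 0 < gaussDen n x := by
  rw [gaussDen, Real.toNNReal_pos]
  positivity

lemma gaussDen_coe (x : EuclideanSpace ℝ (Fin n)) :
    ((gaussDen n x : ℝ)) = ((2*π) ^ ((n:ℝ)/2))⁻¹ * Real.exp (-(1/2) * ‖x‖^2) := by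
  rw [gaussDen, Real.coe_toNNReal]
  positivity

/-- the standard gaussian measure on EuclideanSpace -/
def gaussMeasure (n : ℕ) : Measure (EuclideanSpace ℝ (Fin n)) :=
  volume.withDensity (fun x => ((gaussDen n x : ℝ≥0∞)))

lemma gauss_total : ∫ x : EuclideanSpace ℝ (Fin n), Real.exp (-(1/2) * ‖x‖^2)
    = (2*π) ^ ((n:ℝ)/2) := by
  rw [GaussianFourier.integral_rexp_neg_mul_sq_norm (by norm_num : (0:ℝ) < 1/2)]
  rw [finrank_euclideanSpace, Fintype.card_fin]
  congr 1
  field_simp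

instance : IsProbabilityMeasure (gaussMeasure n) := by
  constructor
  rw [gaussMeasure, withDensity_apply _ MeasurableSet.univ, setLIntegral_univ]
  have hint : Integrable (fun x : EuclideanSpace ℝ (Fin n) =>
      ((2*π) ^ ((n:ℝ)/2))⁻¹ * Real.exp (-(1/2) * ‖x‖^2)) volume :=
    (integrable_gauss_real (by norm_num)).const_mul _
  have heq : ∀ x : EuclideanSpace ℝ (Fin n), ((gaussDen n x : ℝ≥0∞))
      = ENNReal.ofReal (((2*π) ^ ((n:ℝ)/2))⁻¹ * Real.exp (-(1/2) * ‖x‖^2)) := by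
    intro x; rw [gaussDen, ENNReal.ofReal]
  simp_rw [heq]
  rw [← ofReal_integral_eq_lintegral_ofReal hint
    (Filter.Eventually.of_forall fun x => by positivity)]
  rw [integral_const_mul, gauss_total]
  rw [inv_mul_cancel₀ (by positivity)]
  simp

lemma gauss_char (w : EuclideanSpace ℝ (Fin n)) :
    ∫ x, Complex.exp (Complex.I * (⟪w, x⟫ : ℂ)) ∂(gaussMeasure n)
      = (Real.exp (-‖w‖^2 / 2) : ℂ) := by
  rw [gaussMeasure, integral_withDensity_eq_integral_smul gaussDen_meas']
  have hb : (0:ℝ) < (((1/2 : ℝ) : ℂ)).re := by norm_num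
  have hker := GaussianFourier.integral_cexp_neg_mul_sq_norm_add
    (V := EuclideanSpace ℝ (Fin n)) hb Complex.I w
  have hstep : ∀ x : EuclideanSpace ℝ (Fin n),
      gaussDen n x • Complex.exp (Complex.I * (⟪w, x⟫ : ℂ))
        = ((((2*π) ^ ((n:ℝ)/2))⁻¹ : ℝ) : ℂ) *
            Complex.exp (-(((1/2 : ℝ) : ℂ)) * ‖x‖^2 + Complex.I * (⟪w, x⟫ : ℂ)) := by
    intro x
    rw [NNReal.smul_def, Complex.real_smul, gaussDen_coe, Complex.ofReal_mul, mul_assoc]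
    congr 1
    rw [Complex.ofReal_exp, ← Complex.exp_add]
    congr 1
    push_cast
    ring
  simp_rw [hstep]
  rw [integral_const_mul, hker, finrank_euclideanSpace, Fintype.card_fin]
  have hcoe : ((π : ℂ) / ((1/2 : ℝ) : ℂ)) ^ ((n : ℂ) / 2)
      = (((2*π) ^ ((n:ℝ)/2) : ℝ) : ℂ) := by
    rw [show ((π : ℂ) / ((1/2 : ℝ) : ℂ)) = ((2*π : ℝ) : ℂ) by push_cast; ring]
    rw [Complex.ofReal_cpow (by positivity)]
    congr 1
    push_cast
    ring
  rw [hcoe, ← mul_assoc, ← Complex.ofReal_mul, inv_mul_cancel₀ (by positivity)]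
  rw [Complex.ofReal_one, one_mul]
  rw [Complex.ofReal_exp]
  congr 1
  rw [Complex.I_sq]
  push_cast
  ring

lemma gauss_pos {U : Set (EuclideanSpace ℝ (Fin n))} (hU : IsOpen U) (hne : U.Nonempty) :
    0 < gaussMeasure n U := by
  rw [gaussMeasure, withDensity_apply _ hU.measurableSet]
  rw [pos_iff_ne_zero]
  intro h0
  rw [lintegral_eq_zero_iff gaussDen_meas] at h0
  have hvol : volume U = 0 := by
    have : ∀ᵐ x ∂(volume.restrict U), False := by
      filter_upwards [h0] with x hx
      exact absurd hx (by
        simp only [Pi.zero_apply, ENNReal.coe_eq_zero]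
        exact (gaussDen_pos x).ne')
    have hbot := Filter.eventually_false_iff_eq_bot.mp this
    exact Measure.restrict_eq_zero.mp ((MeasureTheory.ae_eq_bot).mp hbot)
  exact absurd hvol (hU.measure_ne_zero volume hne)





lemma key {Ω : Type*} [MeasurableSpace Ω] (P : Measure Ω) [IsProbabilityMeasure P]
    (X : Ω → EuclideanSpace ℝ (Fin n)) (hX : Measurable X)
    (ψ : EuclideanSpace ℝ (Fin n) → ℂ)
    (hc : ∀ t : EuclideanSpace ℝ (Fin n),
      ∫ ω, Complex.exp (Complex.I * (⟪t, X ω⟫ : ℂ)) ∂P = ψ t)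
    {τ : ℝ} (hτ : 0 < τ) (a : EuclideanSpace ℝ (Fin n)) :
    ((π / ((1/(2*τ) : ℝ) : ℂ)) ^ ((n : ℂ) / 2)) *
        ∫ ω, (Real.exp (-(τ/2) * ‖X ω - a‖^2) : ℂ) ∂P
      = ∫ t : EuclideanSpace ℝ (Fin n),
          Complex.exp (-((1/(2*τ) : ℝ) : ℂ) * ‖t‖^2 - Complex.I * (⟪a, t⟫ : ℂ)) * ψ t := by
  set b : ℂ := ((1/(2*τ) : ℝ) : ℂ) with hb_def
  have hb : 0 < b.re := by simp [hb_def]; positivity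
  have hfr : (Module.finrank ℝ (EuclideanSpace ℝ (Fin n)) : ℂ) / 2 = (n : ℂ) / 2 := by
    rw [finrank_euclideanSpace, Fintype.card_fin]
  -- kernel identity
  have kernel : ∀ w : EuclideanSpace ℝ (Fin n),
      ∫ t : EuclideanSpace ℝ (Fin n), Complex.exp (-b * ‖t‖^2 + Complex.I * (⟪w, t⟫ : ℂ))
        = ((π / b) ^ ((n : ℂ) / 2)) * (Real.exp (-(τ/2) * ‖w‖^2) : ℂ) := by
    intro w
    have := GaussianFourier.integral_cexp_neg_mul_sq_norm_add hb Complex.I w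
    rw [hfr] at this
    rw [this]
    congr 1
    rw [Complex.ofReal_exp]
    congr 1
    have hτ' : (τ : ℂ) ≠ 0 := by exact_mod_cast hτ.ne'
    rw [hb_def]
    push_cast
    field_simp
    rw [Complex.I_sq]
    ring
  -- norm of the integrand
  have hnorm : ∀ (t : EuclideanSpace ℝ (Fin n)) (r : ℝ),
      ‖Complex.exp (-b * ‖t‖^2 + Complex.I * (r : ℂ))‖ = Real.exp (-(1/(2*τ)) * ‖t‖^2) := by
    intro t r
    rw [Complex.norm_exp]
    congr 1
    simp [hb_def, Complex.add_re, Complex.mul_re, ← Complex.ofReal_pow]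
  -- integrability of the gaussian kernel
  have hg : Integrable (fun t : EuclideanSpace ℝ (Fin n) =>
      Real.exp (-(1/(2*τ)) * ‖t‖^2)) volume := by
    have h0 := (GaussianFourier.integrable_cexp_neg_mul_sq_norm_add
      (V := EuclideanSpace ℝ (Fin n)) hb Complex.I (0 : EuclideanSpace ℝ (Fin n))).norm
    simp only [inner_zero_left, Complex.ofReal_zero, mul_zero, add_zero] at h0
    refine h0.congr (Filter.Eventually.of_forall fun t => ?_)
    have := hnorm t 0
    simpa using this
  -- measurability of the big integrand
  have hinner : Measurable fun z : Ω × EuclideanSpace ℝ (Fin n) => (⟪X z.1 - a, z.2⟫ : ℝ) := by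
    have : Continuous fun p : EuclideanSpace ℝ (Fin n) × EuclideanSpace ℝ (Fin n) =>
        (⟪p.1, p.2⟫ : ℝ) := continuous_inner
    exact this.measurable.comp (((hX.comp measurable_fst).sub measurable_const).prodMk
      measurable_snd)
  have hFmeas : AEStronglyMeasurable
      (fun z : Ω × EuclideanSpace ℝ (Fin n) =>
        Complex.exp (-b * ‖z.2‖^2 + Complex.I * ((⟪X z.1 - a, z.2⟫ : ℝ) : ℂ)))
      (P.prod volume) := by
    apply Measurable.aestronglyMeasurable
    refine Complex.measurable_exp.comp (Measurable.add ?_ ?_)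
    · exact ((Complex.measurable_ofReal.comp measurable_snd.norm).pow_const 2).const_mul (-b)
    · exact (Complex.measurable_ofReal.comp hinner).const_mul Complex.I
  -- integrability on the product
  have hFint : Integrable
      (fun z : Ω × EuclideanSpace ℝ (Fin n) =>
        Complex.exp (-b * ‖z.2‖^2 + Complex.I * ((⟪X z.1 - a, z.2⟫ : ℝ) : ℂ)))
      (P.prod volume) := by
    have hgprod : Integrable
        (fun z : Ω × EuclideanSpace ℝ (Fin n) =>
          (1 : ℝ) * Real.exp (-(1/(2*τ)) * ‖z.2‖^2)) (P.prod volume) :=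
      (integrable_const (1:ℝ)).mul_prod hg
    refine hgprod.mono' hFmeas (Filter.Eventually.of_forall fun z => ?_)
    rw [one_mul, hnorm]
  -- main calc
  calc ((π / b) ^ ((n : ℂ) / 2)) * ∫ ω, (Real.exp (-(τ/2) * ‖X ω - a‖^2) : ℂ) ∂P
      = ∫ ω, ((π / b) ^ ((n : ℂ) / 2)) * (Real.exp (-(τ/2) * ‖X ω - a‖^2) : ℂ) ∂P := by
        rw [integral_const_mul]
    _ = ∫ ω, ∫ t : EuclideanSpace ℝ (Fin n),
          Complex.exp (-b * ‖t‖^2 + Complex.I * ((⟪X ω - a, t⟫ : ℝ) : ℂ)) ∂volume ∂P := by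
        refine integral_congr_ae (Filter.Eventually.of_forall fun ω => ?_)
        dsimp only
        exact (kernel (X ω - a)).symm
    _ = ∫ t : EuclideanSpace ℝ (Fin n), ∫ ω,
          Complex.exp (-b * ‖t‖^2 + Complex.I * ((⟪X ω - a, t⟫ : ℝ) : ℂ)) ∂P ∂volume := by
        exact integral_integral_swap hFint
    _ = ∫ t : EuclideanSpace ℝ (Fin n),
          Complex.exp (-b * ‖t‖^2 - Complex.I * (⟪a, t⟫ : ℂ)) * ψ t := by
        refine integral_congr_ae (Filter.Eventually.of_forall fun t => ?_)
        dsimp only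
        rw [← hc t, ← integral_const_mul]
        refine integral_congr_ae (Filter.Eventually.of_forall fun ω => ?_)
        dsimp only
        rw [← Complex.exp_add]
        congr 1
        have : (⟪X ω - a, t⟫ : ℝ) = (⟪t, X ω⟫ : ℝ) - (⟪a, t⟫ : ℝ) := by
          rw [inner_sub_left, real_inner_comm (X ω) t]
        rw [this]
        push_cast
        ring

section Model
variable {L : Type*} [NormedAddCommGroup L] [InnerProductSpace ℝ L]




/-- linear-algebra model: from a linearly independent family `h` in an inner product space,
produce a surjective linear endomorphism `T` of Euclidean space and a map `A` with
`⟪t, T x⟫ = ⟪A t, x⟫` and `‖A t‖ = ‖∑ i, t i • h i‖`. -/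
lemma model_exists (h : Fin n → L) (hind : LinearIndependent ℝ h) :
    ∃ (T : EuclideanSpace ℝ (Fin n) →ₗ[ℝ] EuclideanSpace ℝ (Fin n))
      (A : EuclideanSpace ℝ (Fin n) → EuclideanSpace ℝ (Fin n)),
      Function.Surjective T ∧
      (∀ (t x : EuclideanSpace ℝ (Fin n)), ⟪t, T x⟫ = ⟪A t, x⟫) ∧
      (∀ t : EuclideanSpace ℝ (Fin n), ‖A t‖ = ‖∑ i, t i • h i‖) := by
  classical
  set S := Submodule.span ℝ (Set.range h) with hS
  have : FiniteDimensional ℝ S := FiniteDimensional.span_of_finite ℝ (Set.finite_range h)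
  have hdim : Module.finrank ℝ S = n := by
    rw [hS, finrank_span_eq_card hind, Fintype.card_fin]
  let b : OrthonormalBasis (Fin n) ℝ S :=
    (stdOrthonormalBasis ℝ S).reindex (finCongr hdim)
  have hmem : ∀ i, h i ∈ S := fun i => Submodule.subset_span ⟨i, rfl⟩
  let hv : Fin n → S := fun i => ⟨h i, hmem i⟩
  let r : Fin n → EuclideanSpace ℝ (Fin n) := fun i => b.repr (hv i)
  -- r is linearly independent, hence spans
  have hrind : LinearIndependent ℝ r := by
    have h1 : LinearIndependent ℝ hv := by
      apply LinearIndependent.of_comp S.subtype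
      exact hind
    exact h1.map' b.repr.toLinearEquiv.toLinearMap b.repr.toLinearEquiv.ker
  have hspan : Submodule.span ℝ (Set.range r) = ⊤ :=
    hrind.span_eq_top_of_card_eq_finrank' (by
      rw [Fintype.card_fin, finrank_euclideanSpace, Fintype.card_fin])
  -- the linear map T
  let T : EuclideanSpace ℝ (Fin n) →ₗ[ℝ] EuclideanSpace ℝ (Fin n) :=
    (WithLp.linearEquiv 2 ℝ (Fin n → ℝ)).symm.toLinearMap ∘ₗ LinearMap.pi (fun i => ((innerSL ℝ (r i)) : EuclideanSpace ℝ (Fin n) →ₗ[ℝ] ℝ))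
  have hT_apply : ∀ (x : EuclideanSpace ℝ (Fin n)) (i : Fin n), T x i = ⟪r i, x⟫ :=
    fun x i => rfl
  -- T injective
  have hTinj : Function.Injective T := by
    rw [← LinearMap.ker_eq_bot, Submodule.eq_bot_iff]
    intro x hx
    have hx' : ∀ i, ⟪r i, x⟫ = 0 := by
      intro i
      have := congrFun (congrArg (fun v : EuclideanSpace ℝ (Fin n) => (v : Fin n → ℝ)) hx) i
      simpa [hT_apply] using this
    have hall : ∀ u ∈ Submodule.span ℝ (Set.range r), ⟪u, x⟫ = 0 := by
      intro u hu
      induction hu using Submodule.span_induction with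
      | mem u hu => obtain ⟨i, rfl⟩ := hu; exact hx' i
      | zero => simp
      | add u v _ _ hu hv => rw [inner_add_left, hu, hv, add_zero]
      | smul c u _ hu => rw [inner_smul_left, hu, mul_zero]
    have := hall x (by rw [hspan]; trivial)
    exact inner_self_eq_zero.mp this
  have hTsurj : Function.Surjective T := by
    rwa [← LinearMap.injective_iff_surjective]
  -- A
  refine ⟨T, fun t => ∑ i, t i • r i, hTsurj, ?_, ?_⟩
  · intro t x
    rw [sum_inner]
    rw [PiLp.inner_apply]
    refine Finset.sum_congr rfl fun i _ => ?_
    rw [inner_smul_left, hT_apply]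
    simp [RCLike.inner_apply, mul_comm]
  · intro t
    dsimp only
    have hsum : (∑ i, t i • r i) = b.repr (∑ i, t i • hv i) := by
      rw [map_sum]
      refine Finset.sum_congr rfl fun i _ => ?_
      rw [LinearIsometryEquiv.map_smul]
    rw [hsum, LinearIsometryEquiv.norm_map]
    rw [← Submodule.norm_coe]
    congr 1
    push_cast
    rfl

end Model
end
end AuxGaussianField

/-- If h₁, …, hₙ ∈ ℒ are linearly independent and p ∈ ℝ[x₁, …, xₙ],
then p(Φ(h₁), …, Φ(hₙ)) = 0 ℙ-a.e. iff p vanishes identically on ℝⁿ. -/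
theorem polynomialField_zero_iff
    {Ω : Type*} [MeasurableSpace Ω] (P : Measure Ω) [IsProbabilityMeasure P]
    {L : Type*} [NormedAddCommGroup L] [InnerProductSpace ℝ L]
    (Φ : L →ₗ[ℝ] (Ω → ℝ))
    (hmeas : ∀ k : L, Measurable (Φ k))
    (hchar : ∀ k : L, ∫ ω, Complex.exp (Complex.I * (Φ k ω : ℂ)) ∂P
        = (Real.exp (-‖k‖ ^ 2 / 2) : ℂ))
    {n : ℕ} (h : Fin n → L) (hind : LinearIndependent ℝ h)
    (p : MvPolynomial (Fin n) ℝ) :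
    (∀ᵐ ω ∂P, MvPolynomial.eval (fun i => Φ (h i) ω) p = 0) ↔
      (∀ x : Fin n → ℝ, MvPolynomial.eval x p = 0) := by
  constructor
  case mpr => intro H; filter_upwards with ω; exact H _
  intro hae x0
  by_contra hax0
  classical
  set a : EuclideanSpace ℝ (Fin n) := (WithLp.equiv 2 (Fin n → ℝ)).symm x0 with ha_def
  have ha_mem : MvPolynomial.eval (fun i => a i) p ≠ 0 := by
    have haeq : (fun i => a i) = x0 := by funext i; rfl
    rw [haeq]; exact hax0
  -- the random vector
  set X : Ω → EuclideanSpace ℝ (Fin n) := fun ω => WithLp.toLp 2 (fun i => Φ (h i) ω) with hX_def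
  have hX : Measurable X :=
    (PiLp.continuous_toLp 2 _).measurable.comp (measurable_pi_lambda _ (fun i => hmeas (h i)))
  set ψ : EuclideanSpace ℝ (Fin n) → ℂ :=
    fun t => (Real.exp (-‖∑ i, t i • h i‖ ^ 2 / 2) : ℂ) with hψ_def
  -- characteristic function of X
  have hcX : ∀ t : EuclideanSpace ℝ (Fin n),
      ∫ ω, Complex.exp (Complex.I * ((⟪t, X ω⟫ : ℝ) : ℂ)) ∂P = ψ t := by
    intro t
    have hk : ∀ ω, (⟪t, X ω⟫ : ℝ) = Φ (∑ i, t i • h i) ω := by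
      intro ω
      have hsum : Φ (∑ i, t i • h i) = ∑ i, t i • Φ (h i) := by
        rw [map_sum]
        exact Finset.sum_congr rfl fun i _ => Φ.map_smul _ _
      rw [hsum]
      rw [PiLp.inner_apply]
      simp only [RCLike.inner_apply, starRingEnd_apply, star_trivial]
      rw [Finset.sum_apply]
      exact Finset.sum_congr rfl fun i _ => mul_comm _ _
    calc ∫ ω, Complex.exp (Complex.I * ((⟪t, X ω⟫ : ℝ) : ℂ)) ∂P
        = ∫ ω, Complex.exp (Complex.I * ((Φ (∑ i, t i • h i) ω : ℝ) : ℂ)) ∂P := by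
          refine integral_congr_ae (Filter.Eventually.of_forall fun ω => ?_)
          dsimp only
          rw [hk ω]
      _ = ψ t := hchar _
  -- the gaussian model
  obtain ⟨T, A, hTsurj, hTA, hAnorm⟩ := model_exists h hind
  have hTcont : Continuous T := T.continuous_of_finiteDimensional
  have hTmeas : Measurable (fun x => T x) := hTcont.measurable
  have hcT : ∀ t : EuclideanSpace ℝ (Fin n),
      ∫ x, Complex.exp (Complex.I * ((⟪t, T x⟫ : ℝ) : ℂ)) ∂(gaussMeasure n) = ψ t := by
    intro t
    have : ∀ x, (⟪t, T x⟫ : ℝ) = (⟪A t, x⟫ : ℝ) := fun x => hTA t x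
    calc ∫ x, Complex.exp (Complex.I * ((⟪t, T x⟫ : ℝ) : ℂ)) ∂(gaussMeasure n)
        = ∫ x, Complex.exp (Complex.I * ((⟪A t, x⟫ : ℝ) : ℂ)) ∂(gaussMeasure n) := by
          refine integral_congr_ae (Filter.Eventually.of_forall fun x => ?_)
          dsimp only
          rw [this x]
      _ = (Real.exp (-‖A t‖ ^ 2 / 2) : ℂ) := gauss_char (A t)
      _ = ψ t := by rw [hψ_def]; norm_cast; rw [hAnorm t]
  -- equality of smoothed expectations
  have hEq : ∀ τ : ℝ, 0 < τ →
      ∫ ω, Real.exp (-(τ/2) * ‖X ω - a‖^2) ∂P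
        = ∫ x, Real.exp (-(τ/2) * ‖T x - a‖^2)
            ∂(gaussMeasure n) := by
    intro τ hτ
    have h1 := key P X hX ψ hcX hτ a
    have h2 := key (gaussMeasure n) (fun x => T x) hTmeas ψ hcT hτ
      a
    have hC : ((Real.pi / ((1/(2*τ) : ℝ) : ℂ)) ^ ((n : ℂ) / 2)) ≠ 0 := by
      have hbase : (Real.pi / ((1/(2*τ) : ℝ) : ℂ)) ≠ 0 := by
        apply div_ne_zero
        · exact_mod_cast Real.pi_ne_zero
        · simp only [ne_eq, Complex.ofReal_eq_zero]
          positivity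
      rw [Complex.cpow_def_of_ne_zero hbase]
      exact Complex.exp_ne_zero _
    have h3 := h1.trans h2.symm
    have h4 := mul_left_cancel₀ hC h3
    have h5 : (((∫ ω, Real.exp (-(τ/2) * ‖X ω - a‖^2) ∂P) : ℝ) : ℂ)
        = (((∫ x, Real.exp (-(τ/2) * ‖T x - a‖^2) ∂(gaussMeasure n)) : ℝ) : ℂ) :=
      (integral_ofReal).symm.trans (h4.trans integral_ofReal)
    exact_mod_cast h5
  -- the zero set avoids a ball around x0
  have hopen : IsOpen {y : EuclideanSpace ℝ (Fin n) |
      MvPolynomial.eval (fun i => y i) p ≠ 0} := by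
    have hcont : Continuous fun y : EuclideanSpace ℝ (Fin n) =>
        MvPolynomial.eval (fun i => y i) p := by
      have h1 : Continuous fun y : EuclideanSpace ℝ (Fin n) => (fun i => y i : Fin n → ℝ) :=
        continuous_pi fun i => (EuclideanSpace.proj i : _ →L[ℝ] ℝ).continuous
      exact (MvPolynomial.continuous_eval p).comp h1
    exact isOpen_compl_singleton.preimage hcont
  obtain ⟨δ, hδ, hball⟩ := Metric.isOpen_iff.mp hopen a ha_mem
  -- a.e. lower bound on the distance
  have hdist : ∀ᵐ ω ∂P, δ ≤ ‖X ω - a‖ := by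
    filter_upwards [hae] with ω hω
    by_contra hlt
    push_neg at hlt
    have : X ω ∈ Metric.ball a δ := by
      rw [Metric.mem_ball, dist_eq_norm]
      exact hlt
    exact (hball this) hω
  -- integrability of the smoothed integrands
  have hLmeas : ∀ τ : ℝ, AEStronglyMeasurable
      (fun ω => Real.exp (-(τ/2) * ‖X ω - a‖^2)) P := by
    intro τ
    exact (Real.measurable_exp.comp
      ((((hX.sub measurable_const).norm.pow_const 2)).const_mul (-(τ/2)))).aestronglyMeasurable
  have hLint : ∀ τ : ℝ, 0 < τ → Integrable
      (fun ω => Real.exp (-(τ/2) * ‖X ω - a‖^2)) P := by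
    intro τ hτ
    refine (integrable_const (1:ℝ)).mono' (hLmeas τ)
      (Filter.Eventually.of_forall fun ω => ?_)
    rw [Real.norm_eq_abs, abs_of_pos (Real.exp_pos _), Real.exp_le_one_iff]
    nlinarith [norm_nonneg (X ω - a), sq_nonneg
      ‖X ω - a‖]
  have hRmeas : ∀ τ : ℝ, AEStronglyMeasurable
      (fun x => Real.exp (-(τ/2) * ‖T x - a‖^2))
      (gaussMeasure n) := by
    intro τ
    exact (Real.measurable_exp.comp
      ((((hTmeas.sub measurable_const).norm.pow_const 2)).const_mul (-(τ/2)))).aestronglyMeasurable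
  have hRint : ∀ τ : ℝ, 0 < τ → Integrable
      (fun x => Real.exp (-(τ/2) * ‖T x - a‖^2))
      (gaussMeasure n) := by
    intro τ hτ
    refine (integrable_const (1:ℝ)).mono' (hRmeas τ)
      (Filter.Eventually.of_forall fun x => ?_)
    rw [Real.norm_eq_abs, abs_of_pos (Real.exp_pos _), Real.exp_le_one_iff]
    nlinarith [norm_nonneg (T x - a), sq_nonneg
      ‖T x - a‖]
  -- the positive-mass preimage set
  set W : Set (EuclideanSpace ℝ (Fin n)) :=
    (fun x => T x) ⁻¹' (Metric.ball a (δ/2)) with hW_def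
  have hWopen : IsOpen W := Metric.isOpen_ball.preimage hTcont
  have hWne : W.Nonempty := by
    obtain ⟨z, hz⟩ := hTsurj a
    exact ⟨z, by simp [hW_def, hz, Metric.mem_ball, hδ, half_pos hδ]⟩
  set κ : ℝ := (gaussMeasure n W).toReal with hκ_def
  have hκpos : 0 < κ := by
    rw [hκ_def]
    exact ENNReal.toReal_pos (gauss_pos hWopen hWne).ne' (measure_ne_top _ _)
  -- the main inequality, for every τ > 0
  have hineq : ∀ τ : ℝ, 0 < τ →
      κ * Real.exp (-(τ/2) * (δ/2)^2) ≤ Real.exp (-(τ/2) * δ^2) := by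
    intro τ hτ
    have hL : ∫ ω, Real.exp (-(τ/2) * ‖X ω - a‖^2) ∂P
        ≤ Real.exp (-(τ/2) * δ^2) := by
      have := integral_mono_ae (hLint τ hτ) (integrable_const _) (by
        filter_upwards [hdist] with ω hω
        have hn : (0:ℝ) ≤ ‖X ω - a‖ := norm_nonneg _
        have hsq : δ^2 ≤ ‖X ω - a‖^2 := pow_le_pow_left₀ hδ.le hω 2
        exact Real.exp_le_exp.mpr (mul_le_mul_of_nonpos_left hsq (by linarith)))
      simpa using this
    have hR : κ * Real.exp (-(τ/2) * (δ/2)^2)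
        ≤ ∫ x, Real.exp (-(τ/2) * ‖T x - a‖^2)
            ∂(gaussMeasure n) := by
      have hsub : ∫ x in W, Real.exp (-(τ/2) * ‖T x - a‖^2)
          ∂(gaussMeasure n)
          ≤ ∫ x, Real.exp (-(τ/2) * ‖T x - a‖^2)
            ∂(gaussMeasure n) :=
        setIntegral_le_integral (hRint τ hτ)
          (Filter.Eventually.of_forall fun x => (Real.exp_pos _).le)
      refine le_trans ?_ hsub
      have hconst := setIntegral_ge_of_const_le (μ := gaussMeasure n)
        (c := Real.exp (-(τ/2) * (δ/2)^2)) hWopen.measurableSet (measure_ne_top _ _)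
        (fun x hx => by
          rw [Real.exp_le_exp]
          have hxball : ‖T x - a‖ < δ/2 := by
            rw [← dist_eq_norm]
            exact hx
          have hn : (0:ℝ) ≤ ‖T x - a‖ := norm_nonneg _
          have hsq : ‖T x - a‖^2 ≤ (δ/2)^2 := pow_le_pow_left₀ hn hxball.le 2
          exact mul_le_mul_of_nonpos_left hsq (by linarith))
        ((hRint τ hτ).integrableOn)
      exact hconst
    calc κ * Real.exp (-(τ/2) * (δ/2)^2) ≤ _ := hR
      _ = ∫ ω, Real.exp (-(τ/2) * ‖X ω - a‖^2) ∂P :=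
        (hEq τ hτ).symm
      _ ≤ Real.exp (-(τ/2) * δ^2) := hL
  -- derive a contradiction by letting τ → ∞
  have hκle : ∀ τ : ℝ, 0 < τ → κ ≤ Real.exp (-(3/8) * τ * δ^2) := by
    intro τ hτ
    have h1 := hineq τ hτ
    have h2 : κ ≤ Real.exp (-(τ/2) * δ^2) / Real.exp (-(τ/2) * (δ/2)^2) := by
      rw [le_div_iff₀ (Real.exp_pos _)]
      exact h1
    rw [← Real.exp_sub] at h2
    refine h2.trans (le_of_eq ?_)
    congr 1
    ring
  set τ : ℝ := max 1 ((-8 * Real.log κ)/(3*δ^2) + 1) with hτ_def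
  have hτpos : 0 < τ := lt_of_lt_of_le one_pos (le_max_left _ _)
  have hτge : (-8 * Real.log κ)/(3*δ^2) + 1 ≤ τ := le_max_right _ _
  have hcontra : Real.exp (-(3/8) * τ * δ^2) < κ := by
    rw [show κ = Real.exp (Real.log κ) from (Real.exp_log hκpos).symm]
    rw [Real.exp_lt_exp]
    have hδ2 : 0 < δ^2 := by positivity
    have : -(3/8) * τ * δ^2 ≤ -(3/8) * ((-8 * Real.log κ)/(3*δ^2) + 1) * δ^2 := by
      have hmul := mul_le_mul_of_nonneg_right hτge hδ2.le
      nlinarith [hmul]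
    refine lt_of_le_of_lt this ?_
    have hkey : -(3/8) * ((-8 * Real.log κ)/(3*δ^2) + 1) * δ^2
        = Real.log κ - (3/8) * δ^2 := by
      field_simp
      ring
    rw [hkey]
    linarith
  exact absurd (hκle τ hτpos) (not_le.mpr hcontra)
end
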